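/- Let s ∈ (0,∞)^k and let P be a canonical span program computing f : {0,1}^k → {0,1}, with input vectors |v_i⟩ indexed by I. Assume that for each x with f(x) = 0, the vector |x⟩ is an optimal witness for f_P(x) = 0, i.e., Σ_{j∈[k]} s_j Σ_{i∈I_{j,1−x_j}} |⟨v_i|x⟩|² = wsize_s(P, x). Let B be the block matrix with rows indexed by f⁻¹(0) ⊔ I and columns indexed by {0} ⊔ I, whose column 0 is (|t⟩; 0) and whose column i ∈ I is (|v_i⟩; |i⟩) (i.e., B = [[|t⟩, A],[0, 𝟙_I]] with A = Σ_{i∈I}|v_i⟩⟨i|). Then ‖abs(B)‖² ≤ 2^k (1 + wsize_s(P) / min_{j∈[k]} s_j) + |I|, where abs(B) denotes the entrywise absolute value of B and ‖·‖ the operator norm. -/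

import Mathlib

noncomputable section

/-- Operator (spectral) norm of a real matrix. -/
def opNorm {m n : Type} [Fintype m] [Fintype n] [DecidableEq n] (M : Matrix m n ℝ) : ℝ :=
  ‖LinearMap.toContinuousLinearMap (Matrix.toEuclideanLin M)‖

/-- The general adversary bound with costs `s` of `f : {0,1}^ι → {0,1}`. -/
def ADVpm {ι : Type} [Fintype ι] [DecidableEq ι] (s : ι → ℝ) (f : (ι → Bool) → Bool) : ℝ :=
  sSup { r : ℝ | ∃ Γ : Matrix (ι → Bool) (ι → Bool) ℝ, Γ.IsSymm ∧
    (∀ x y, f x = f y → Γ x y = 0) ∧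
    (∀ j : ι, opNorm (Matrix.of fun x y => if x j ≠ y j then Γ x y else 0) ≤ s j) ∧
    r = opNorm Γ }

/-- The nonnegative-weight adversary bound with costs `s`. -/
def ADVnn {ι : Type} [Fintype ι] [DecidableEq ι] (s : ι → ℝ) (f : (ι → Bool) → Bool) : ℝ :=
  sSup { r : ℝ | ∃ Γ : Matrix (ι → Bool) (ι → Bool) ℝ, Γ.IsSymm ∧
    (∀ x y, 0 ≤ Γ x y) ∧
    (∀ x y, f x = f y → Γ x y = 0) ∧
    (∀ j : ι, opNorm (Matrix.of fun x y => if x j ≠ y j then Γ x y else 0) ≤ s j) ∧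
    r = opNorm Γ }

end

noncomputable section

/-- A span program on input bits indexed by `ι`, with a finite-dimensional complex inner
product space `V`, a target vector, free input vectors indexed by `Ifree`, and input
vectors indexed by `Iin j b` (available when the `j`-th input bit equals `b`). -/
structure SpanProgram (ι : Type) where
  V : Type
  [nacg : NormedAddCommGroup V]
  [ips : InnerProductSpace ℂ V]
  [fd : FiniteDimensional ℂ V]
  Ifree : Type
  [freeFin : Fintype Ifree]
  [freeDec : DecidableEq Ifree]
  Iin : ι → Bool → Type
  [inFin : ∀ j b, Fintype (Iin j b)]
  [inDec : ∀ j b, DecidableEq (Iin j b)]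
  target : V
  vfree : Ifree → V
  vin : ∀ j b, Iin j b → V

attribute [instance] SpanProgram.nacg SpanProgram.ips SpanProgram.fd
attribute [instance] SpanProgram.freeFin SpanProgram.freeDec
attribute [instance] SpanProgram.inFin SpanProgram.inDec

namespace SpanProgram

variable {ι : Type} [Fintype ι] [DecidableEq ι]

/-- The index set `I = I_free ∪ ⋃_{j,b} I_{j,b}` of all input vectors. -/
abbrev Idx (P : SpanProgram ι) : Type := P.Ifree ⊕ Σ j : ι, Σ b : Bool, P.Iin j b

/-- All input vectors, as a single family over `Idx`. -/
def vec (P : SpanProgram ι) : P.Idx → P.V :=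
  Sum.elim P.vfree (fun p => P.vin p.1 p.2.1 p.2.2)

/-- `P` evaluates to true on `x` iff the target lies in the span of the available
input vectors (the free ones together with those indexed by `I_{j, x_j}`). -/
def spanned (P : SpanProgram ι) (x : ι → Bool) : Prop :=
  P.target ∈ Submodule.span ℂ
    (Set.range P.vfree ∪ ⋃ j : ι, Set.range (P.vin j (x j)))

/-- The boolean function computed by `P`. -/
def fP (P : SpanProgram ι) (x : ι → Bool) : Bool :=
  letI := Classical.propDecidable (P.spanned x)
  decide (P.spanned x)

/-- `w : ℂ^I` is a witness for `f_P(x) = 1`: it is supported on available input vectors,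
and the input vectors weighted by `w` sum to the target. -/
def IsWitness1 (P : SpanProgram ι) (x : ι → Bool) (w : P.Idx → ℂ) : Prop :=
  (∀ (j : ι) (b : Bool) (i : P.Iin j b), b ≠ x j → w (.inr ⟨j, b, i⟩) = 0) ∧
  ∑ i : P.Idx, w i • P.vec i = P.target

/-- `w' ∈ V` is a witness for `f_P(x) = 0`: it has unit inner product with the target and
is orthogonal to all available input vectors. -/
def IsWitness0 (P : SpanProgram ι) (x : ι → Bool) (w' : P.V) : Prop :=
  (inner ℂ P.target w' : ℂ) = 1 ∧
  (∀ i : P.Ifree, (inner ℂ (P.vfree i) w' : ℂ) = 0) ∧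
  (∀ (j : ι) (i : P.Iin j (x j)), (inner ℂ (P.vin j (x j) i) w' : ℂ) = 0)

/-- `‖S|w⟩‖²`, the size of a `1`-witness `w` with costs `s`. -/
def wval1 (P : SpanProgram ι) (s : ι → ℝ) (w : P.Idx → ℂ) : ℝ :=
  ∑ j : ι, ∑ b : Bool, ∑ i : P.Iin j b, s j * ‖w (.inr ⟨j, b, i⟩)‖ ^ 2

/-- `1 + ‖S^f|w⟩‖²`, the full size of a `1`-witness `w` with costs `s`. -/
def wval1f (P : SpanProgram ι) (s : ι → ℝ) (w : P.Idx → ℂ) : ℝ :=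
  1 + (∑ i : P.Ifree, ‖w (.inl i)‖ ^ 2) + P.wval1 s w

/-- `‖S A†|w'⟩‖²`, the size of a `0`-witness `w'` with costs `s`. -/
def wval0 (P : SpanProgram ι) (s : ι → ℝ) (w' : P.V) : ℝ :=
  ∑ j : ι, ∑ b : Bool, ∑ i : P.Iin j b, s j * ‖(inner ℂ (P.vin j b i) w' : ℂ)‖ ^ 2

/-- `‖|w'⟩‖² + ‖S A†|w'⟩‖²`, the full size of a `0`-witness `w'` with costs `s`. -/
def wval0f (P : SpanProgram ι) (s : ι → ℝ) (w' : P.V) : ℝ :=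
  ‖w'‖ ^ 2 + P.wval0 s w'

/-- The witness size of `P` on input `x` with costs `s`. -/
def wsizex (P : SpanProgram ι) (s : ι → ℝ) (x : ι → Bool) : ℝ :=
  if P.fP x then sInf { r | ∃ w, P.IsWitness1 x w ∧ r = P.wval1 s w }
  else sInf { r | ∃ w', P.IsWitness0 x w' ∧ r = P.wval0 s w' }

/-- The witness size of `P` with costs `s`. -/
def wsize (P : SpanProgram ι) (s : ι → ℝ) : ℝ := ⨆ x : ι → Bool, P.wsizex s x

/-- The full witness size of `P` on input `x` with costs `s`. -/
def wsizefx (P : SpanProgram ι) (s : ι → ℝ) (x : ι → Bool) : ℝ :=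
  if P.fP x then sInf { r | ∃ w, P.IsWitness1 x w ∧ r = P.wval1f s w }
  else sInf { r | ∃ w', P.IsWitness0 x w' ∧ r = P.wval0f s w' }

/-- The full witness size of `P` with costs `s`. -/
def wsizef (P : SpanProgram ι) (s : ι → ℝ) : ℝ := ⨆ x : ι → Bool, P.wsizefx s x

end SpanProgram

end

/-- The canonical span program with data `(Iin, vin)` for `f`: the space is
`ℂ^{f⁻¹(0)}`, the target is `Σ_{x : f(x)=0} |x⟩`, and there are no free input vectors. -/
noncomputable def canonicalSP {k : ℕ} (f : (Fin k → Bool) → Bool)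
    (Iin : Fin k → Bool → Type) [∀ j b, Fintype (Iin j b)] [∀ j b, DecidableEq (Iin j b)]
    (vin : ∀ j b, Iin j b → EuclideanSpace ℂ {x : Fin k → Bool // f x = false}) :
    SpanProgram (Fin k) where
  V := EuclideanSpace ℂ {x : Fin k → Bool // f x = false}
  Ifree := Empty
  Iin := Iin
  target := WithLp.toLp 2 (fun _ => 1)
  vfree := Empty.elim
  vin := vin

/-- The operator norm squared is at most the squared Frobenius norm. -/
lemma opNorm_sq_le_frob {m n : Type} [Fintype m] [Fintype n] [DecidableEq n]
    (M : Matrix m n ℝ) : opNorm M ^ 2 ≤ ∑ r, ∑ c, M r c ^ 2 := by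
  have hS : (0:ℝ) ≤ ∑ r, ∑ c, M r c ^ 2 :=
    Finset.sum_nonneg fun r _ => Finset.sum_nonneg fun c _ => sq_nonneg _
  have h : opNorm M ≤ Real.sqrt (∑ r, ∑ c, M r c ^ 2) := by
    apply ContinuousLinearMap.opNorm_le_bound _ (Real.sqrt_nonneg _)
    intro x
    have hx : (0:ℝ) ≤ ‖x‖ := norm_nonneg _
    rw [← Real.sqrt_sq hx, ← Real.sqrt_mul hS]
    rw [show (LinearMap.toContinuousLinearMap (Matrix.toEuclideanLin M)) x
        = Matrix.toEuclideanLin M x from rfl]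
    have hnorm : ‖Matrix.toEuclideanLin M x‖
        = Real.sqrt (∑ r, (M.mulVec (fun c => x c) r) ^ 2) := by
      rw [EuclideanSpace.norm_eq]
      congr 1
      refine Finset.sum_congr rfl fun r _ => ?_
      rw [Real.norm_eq_abs, sq_abs]
      rfl
    rw [hnorm]
    apply Real.sqrt_le_sqrt
    have hxnorm : ‖x‖ ^ 2 = ∑ c, x c ^ 2 := by
      rw [EuclideanSpace.norm_eq, Real.sq_sqrt (Finset.sum_nonneg fun c _ => sq_nonneg _)]
      exact Finset.sum_congr rfl fun c _ => by rw [Real.norm_eq_abs, sq_abs]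
    calc ∑ r, (M.mulVec (fun c => x c) r) ^ 2
        ≤ ∑ r, (∑ c, M r c ^ 2) * (∑ c, x c ^ 2) := by
          refine Finset.sum_le_sum fun r _ => ?_
          exact Finset.sum_mul_sq_le_sq_mul_sq _ _ _
      _ = (∑ r, ∑ c, M r c ^ 2) * ‖x‖ ^ 2 := by rw [hxnorm, ← Finset.sum_mul]
  calc opNorm M ^ 2 ≤ Real.sqrt (∑ r, ∑ c, M r c ^ 2) ^ 2 :=
        pow_le_pow_left₀ (norm_nonneg _) h 2
    _ = _ := Real.sq_sqrt hS

/-- Sum over a double sigma type as iterated sums. -/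
lemma sum_sigma_sigma {k : ℕ} (Iin : Fin k → Bool → Type) [∀ j b, Fintype (Iin j b)]
    (g : (Σ j : Fin k, Σ b : Bool, Iin j b) → ℝ) :
    ∑ p : Σ j : Fin k, Σ b : Bool, Iin j b, g p = ∑ j, ∑ b, ∑ i, g ⟨j, b, i⟩ := by
  rw [← Finset.univ_sigma_univ, Finset.sum_sigma]
  refine Finset.sum_congr rfl fun j _ => ?_
  rw [← Finset.univ_sigma_univ, Finset.sum_sigma]

/-- norm bound for canonical span programs.  If `P` is a canonical span
program computing `f` in which, for every `x ∈ f⁻¹(0)`, the vector `|x⟩` is an optimal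
`0`-witness, then the biadjacency-type matrix `B = [[|t⟩, A], [0, 𝟙]]` satisfies
`‖abs(B)‖² ≤ 2^k (1 + wsize_s(P)/min_j s_j) + |I|`. -/
theorem canonical_norm_bound {k : ℕ} (f : (Fin k → Bool) → Bool)
    (s : Fin k → ℝ) (hs : ∀ j, 0 < s j)
    (Iin : Fin k → Bool → Type) [∀ j b, Fintype (Iin j b)] [∀ j b, DecidableEq (Iin j b)]
    (vin : ∀ j b, Iin j b → EuclideanSpace ℂ {x : Fin k → Bool // f x = false})
    (horth : ∀ (x : Fin k → Bool) (hx : f x = false) (j : Fin k) (i : Iin j (x j)),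
      vin j (x j) i ⟨x, hx⟩ = 0)
    (hcomp : ∀ x, (canonicalSP f Iin vin).fP x = f x)
    (hopt : ∀ (x : Fin k → Bool) (hx : f x = false),
      ∑ j : Fin k, ∑ i : Iin j (!(x j)), s j * ‖vin j (!(x j)) i ⟨x, hx⟩‖ ^ 2
        = (canonicalSP f Iin vin).wsizex s x)
    (B : Matrix ({x : Fin k → Bool // f x = false} ⊕ (Σ j : Fin k, Σ b : Bool, Iin j b))
            (Unit ⊕ (Σ j : Fin k, Σ b : Bool, Iin j b)) ℂ)
    (hB : B = Matrix.of fun row col => match row, col with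
      | .inl _, .inl _ => 1
      | .inl x, .inr ⟨j, b, i⟩ => vin j b i x
      | .inr _, .inl _ => 0
      | .inr i, .inr i' => if i = i' then 1 else 0) :
    opNorm (Matrix.of fun row col => ‖B row col‖) ^ 2
      ≤ 2 ^ k * (1 + (canonicalSP f Iin vin).wsize s / ⨅ j, s j)
        + Fintype.card (Σ j : Fin k, Σ b : Bool, Iin j b) := by
  classical
  set P := canonicalSP f Iin vin with hP
  set W := P.wsize s with hWdef
  set si := (⨅ j, s j : ℝ) with hsidef
  have hsi0 : 0 ≤ si := by
    rcases Nat.eq_zero_or_pos k with hk | hk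
    · subst hk
      simp only [hsidef]
      exact le_of_eq (Real.iInf_of_isEmpty _).symm
    · haveI : Nonempty (Fin k) := ⟨⟨0, hk⟩⟩
      exact le_ciInf fun j => (hs j).le
  have hwx0 : ∀ x, 0 ≤ P.wsizex s x := by
    intro x
    unfold SpanProgram.wsizex
    split
    · refine Real.sInf_nonneg ?_
      rintro r ⟨w, -, rfl⟩
      exact Finset.sum_nonneg fun j _ => Finset.sum_nonneg fun b _ =>
        Finset.sum_nonneg fun i _ => mul_nonneg (hs j).le (sq_nonneg _)
    · refine Real.sInf_nonneg ?_
      rintro r ⟨w, -, rfl⟩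
      exact Finset.sum_nonneg fun j _ => Finset.sum_nonneg fun b _ =>
        Finset.sum_nonneg fun i _ => mul_nonneg (hs j).le (sq_nonneg _)
  have hxleW : ∀ x, P.wsizex s x ≤ W := fun x =>
    le_ciSup (Set.Finite.bddAbove (Set.finite_range _)) x
  have hW0 : 0 ≤ W := (hwx0 (fun _ => false)).trans (hxleW _)
  have hWsi : 0 ≤ W / si := div_nonneg hW0 hsi0
  -- per-row bound on the sum of squared entries coming from the input vectors
  have hrow : ∀ (x : {x : Fin k → Bool // f x = false}),
      (∑ p : Σ j : Fin k, Σ b : Bool, Iin j b, ‖vin p.1 p.2.1 p.2.2 x‖ ^ 2) ≤ W / si := by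
    rintro ⟨x, hx⟩
    rw [sum_sigma_sigma]
    rcases Nat.eq_zero_or_pos k with hk | hk
    · subst hk
      have hsiz : si = 0 := by
        simp only [hsidef]; exact Real.iInf_of_isEmpty _
      rw [hsiz, div_zero]
      refine le_of_eq (Finset.sum_eq_zero ?_)
      rintro ⟨j, hj⟩ -
      exact absurd hj (Nat.not_lt_zero j)
    · haveI : Nonempty (Fin k) := ⟨⟨0, hk⟩⟩
      have hsipos : 0 < si := by
        obtain ⟨j0, -, hj0⟩ :=
          Finset.exists_min_image Finset.univ s ⟨⟨0, hk⟩, Finset.mem_univ _⟩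
        exact lt_of_lt_of_le (hs j0) (le_ciInf fun j => hj0 j (Finset.mem_univ j))
      have hsile : ∀ j, si ≤ s j := fun j =>
        ciInf_le (Set.Finite.bddBelow (Set.finite_range s)) j
      rw [le_div_iff₀ hsipos]
      have keyj : ∀ j : Fin k,
          (∑ b, ∑ i : Iin j b, ‖vin j b i ⟨x, hx⟩‖ ^ 2) * si
            ≤ ∑ i : Iin j (!(x j)), s j * ‖vin j (!(x j)) i ⟨x, hx⟩‖ ^ 2 := by
        intro j
        have h0 : ∀ i : Iin j (x j), vin j (x j) i ⟨x, hx⟩ = 0 := horth x hx j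
        rw [Fintype.sum_bool, add_mul]
        cases hxj : x j
        · rw [hxj] at h0
          simp only [hxj, Bool.not_false]
          have hz : (∑ i : Iin j false, ‖vin j false i ⟨x, hx⟩‖ ^ 2) = 0 :=
            Finset.sum_eq_zero fun i _ => by rw [h0 i]; simp
          rw [hz, zero_mul, add_zero, Finset.sum_mul]
          refine Finset.sum_le_sum fun i _ => ?_
          rw [mul_comm]
          exact mul_le_mul_of_nonneg_right (hsile j) (sq_nonneg _)
        · rw [hxj] at h0
          simp only [hxj, Bool.not_true]
          have hz : (∑ i : Iin j true, ‖vin j true i ⟨x, hx⟩‖ ^ 2) = 0 :=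
            Finset.sum_eq_zero fun i _ => by rw [h0 i]; simp
          rw [hz, zero_mul, zero_add, Finset.sum_mul]
          refine Finset.sum_le_sum fun i _ => ?_
          rw [mul_comm]
          exact mul_le_mul_of_nonneg_right (hsile j) (sq_nonneg _)
      calc (∑ j, ∑ b, ∑ i : Iin j b, ‖vin j b i ⟨x, hx⟩‖ ^ 2) * si
          = ∑ j, (∑ b, ∑ i : Iin j b, ‖vin j b i ⟨x, hx⟩‖ ^ 2) * si := by
            rw [Finset.sum_mul]
        _ ≤ ∑ j, ∑ i : Iin j (!(x j)), s j * ‖vin j (!(x j)) i ⟨x, hx⟩‖ ^ 2 :=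
            Finset.sum_le_sum fun j _ => keyj j
        _ = P.wsizex s x := hopt x hx
        _ ≤ W := hxleW x
  -- now bound the operator norm by the Frobenius norm and compute
  have e1 : ∀ x u, B (Sum.inl x) (Sum.inl u) = 1 := by intro x u; rw [hB]; rfl
  have e2 : ∀ x (j : Fin k) (b : Bool) (i : Iin j b),
      B (Sum.inl x) (Sum.inr ⟨j, b, i⟩) = vin j b i x := by intro x j b i; rw [hB]; rfl
  have e3 : ∀ p u, B (Sum.inr p) (Sum.inl u) = 0 := by intro p u; rw [hB]; rfl
  have e4 : ∀ p p', B (Sum.inr p) (Sum.inr p') = if p = p' then 1 else 0 := by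
    intro p p'; rw [hB]; rfl
  refine le_trans (opNorm_sq_le_frob _) ?_
  have hfrob : (∑ r, ∑ c, ((‖B r c‖ : ℝ)) ^ 2)
      = (∑ x : {x : Fin k → Bool // f x = false},
          (1 + ∑ p : Σ j : Fin k, Σ b : Bool, Iin j b, ‖vin p.1 p.2.1 p.2.2 x‖ ^ 2))
        + (Fintype.card (Σ j : Fin k, Σ b : Bool, Iin j b) : ℝ) := by
    rw [Fintype.sum_sum_type]
    congr 1
    · refine Finset.sum_congr rfl fun x _ => ?_
      rw [Fintype.sum_sum_type]
      congr 1
      · simp [e1]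
      · refine Finset.sum_congr rfl fun p _ => ?_
        rcases p with ⟨j, b, i⟩
        rw [e2]
    · have hone : ∀ p : Σ j : Fin k, Σ b : Bool, Iin j b,
          (∑ c, (‖B (Sum.inr p) c‖ : ℝ) ^ 2) = 1 := by
        intro p
        rw [Fintype.sum_sum_type]
        simp [e3, e4, apply_ite (norm : ℂ → ℝ)]
      rw [Finset.sum_congr rfl (fun p _ => hone p), Finset.sum_const, Finset.card_univ,
        nsmul_eq_mul, mul_one]
  have hgoal : (∑ r, ∑ c, ((Matrix.of fun row col => (‖B row col‖ : ℝ)) r c) ^ 2)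
      = ∑ r, ∑ c, ((‖B r c‖ : ℝ)) ^ 2 := rfl
  rw [hgoal, hfrob]
  have hcard : (Fintype.card {x : Fin k → Bool // f x = false} : ℝ) ≤ 2 ^ k := by
    have h1 := Fintype.card_subtype_le (fun x : Fin k → Bool => f x = false)
    have h2 : Fintype.card (Fin k → Bool) = 2 ^ k := by simp
    calc (Fintype.card {x : Fin k → Bool // f x = false} : ℝ)
        ≤ (Fintype.card (Fin k → Bool) : ℝ) := Nat.cast_le.mpr h1
      _ = 2 ^ k := by rw [h2]; push_cast; ring
  refine add_le_add ?_ le_rfl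
  calc (∑ x : {x : Fin k → Bool // f x = false},
        (1 + ∑ p : Σ j : Fin k, Σ b : Bool, Iin j b, ‖vin p.1 p.2.1 p.2.2 x‖ ^ 2))
      ≤ ∑ _x : {x : Fin k → Bool // f x = false}, (1 + W / si) :=
        Finset.sum_le_sum fun x _ => add_le_add le_rfl (hrow x)
    _ = (Fintype.card {x : Fin k → Bool // f x = false} : ℝ) * (1 + W / si) := by
        rw [Finset.sum_const, Finset.card_univ, nsmul_eq_mul]
    _ ≤ 2 ^ k * (1 + W / si) :=
        mul_le_mul_of_nonneg_right hcard (by positivity)
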